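/- Let g : (0,∞) → ℂ satisfy |g(y)| ≤ A·y^{−α} with α > 2, and let k be the unique positive integer with α − k ∈ (1,2]. Define h(y) = (1/(k−1)!)·∫_∞^y g(z)(y−z)^{k−1} dz (integral along the real ray from ∞ to y). Then |h(y)| ≤ A·Γ(α−k)/(y^{α−k}·Γ(α)) for all y > 0. -/

import Mathlib

open MeasureTheory Real Set


lemma real_beta {s t : ℝ} (hs : 0 < s) (ht : 0 < t) :
    ∫ x in Set.Ioo (0:ℝ) 1, x ^ (s-1) * (1-x) ^ (t-1)
      = Real.Gamma s * Real.Gamma t / Real.Gamma (s+t) := by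
  have hB : Complex.betaIntegral s t
      = ((∫ x in Set.Ioo (0:ℝ) 1, x ^ (s-1) * (1-x) ^ (t-1) : ℝ) : ℂ) := by
    rw [Complex.betaIntegral, intervalIntegral.integral_of_le zero_le_one,
      ← MeasureTheory.integral_Ioc_eq_integral_Ioo]
    refine Eq.trans (setIntegral_congr_fun measurableSet_Ioc (fun x hx => ?_))
      (integral_ofReal (𝕜 := ℂ))
    have h0 : (0:ℝ) ≤ x := le_of_lt hx.1
    have h1 : (0:ℝ) ≤ 1 - x := by linarith [hx.2]
    norm_cast
    rw [← Complex.ofReal_cpow h0, ← Complex.ofReal_cpow h1]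
    norm_cast
  have key := Complex.Gamma_mul_Gamma_eq_betaIntegral
    (s := (s:ℂ)) (t := (t:ℂ)) (by simpa using hs) (by simpa using ht)
  rw [hB, ← Complex.ofReal_add, Complex.Gamma_ofReal, Complex.Gamma_ofReal,
    Complex.Gamma_ofReal, ← Complex.ofReal_mul, ← Complex.ofReal_mul] at key
  have := Complex.ofReal_injective key
  rw [eq_div_iff (Real.Gamma_pos_of_pos (by positivity)).ne']
  linarith [this]

lemma image_div_Ioo (y : ℝ) (hy : 0 < y) :
    (fun x : ℝ => y / x) '' Set.Ioo 0 1 = Set.Ioi y := by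
  ext z
  constructor
  · rintro ⟨x, ⟨hx0, hx1⟩, rfl⟩
    have : y / x > y := by
      rw [gt_iff_lt, lt_div_iff₀ hx0]
      nlinarith
    simpa using this
  · intro hz
    have hz0 : 0 < z := hy.trans hz
    refine ⟨y / z, ⟨by positivity, ?_⟩, ?_⟩
    · rw [div_lt_one hz0]; exact hz
    · field_simp

lemma J_eq {y α : ℝ} (k : ℕ) (hy : 0 < y) (hαk : 1 < α - k) (hk : 1 ≤ k) :
    ∫ z in Set.Ioi y, z ^ (-α) * (z - y) ^ ((k:ℝ) - 1)
      = y ^ ((k:ℝ) - α) * (Real.Gamma (α - k) * Real.Gamma k / Real.Gamma α) := by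
  have hderiv : ∀ x ∈ Set.Ioo (0:ℝ) 1,
      HasDerivWithinAt (fun x : ℝ => y / x) (-(y / x ^ 2)) (Set.Ioo 0 1) x := by
    intro x hx
    have : HasDerivAt (fun x : ℝ => y / x) ((0 * x - y * 1) / x ^ 2) x :=
      (hasDerivAt_const x y).div (hasDerivAt_id x) hx.1.ne'
    rw [show -(y / x ^ 2) = (0 * x - y * 1) / x ^ 2 by ring]
    exact this.hasDerivWithinAt
  have hinj : Set.InjOn (fun x : ℝ => y / x) (Set.Ioo 0 1) := by
    intro a ha b hb hab
    simp only at hab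
    field_simp [ha.1.ne', hb.1.ne'] at hab
    exact hab.symm
  rw [← image_div_Ioo y hy, integral_image_eq_integral_abs_deriv_smul measurableSet_Ioo
    hderiv hinj]
  have hcongr : ∀ x ∈ Set.Ioo (0:ℝ) 1,
      |(-(y / x ^ 2))| • ((y / x) ^ (-α) * (y / x - y) ^ ((k:ℝ) - 1))
        = y ^ ((k:ℝ) - α) * (x ^ (α - k - 1) * (1 - x) ^ ((k:ℝ) - 1)) := by
    intro x hx
    obtain ⟨hx0, hx1⟩ := hx
    have hxx : 0 < 1 - x := by linarith
    have e1 : y / x - y = y * (1 - x) / x := by field_simp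
    have e2 : (x:ℝ) ^ 2 = x ^ (2:ℝ) := by
      rw [← Real.rpow_natCast x 2]; norm_num
    rw [smul_eq_mul, abs_neg, abs_of_pos (by positivity), e1,
      Real.div_rpow hy.le hx0.le, Real.div_rpow (mul_nonneg hy.le hxx.le) hx0.le,
      Real.mul_rpow hy.le hxx.le]
    have hyk : y ^ ((k:ℝ) - α) = y * y ^ ((k:ℝ)-1) * y ^ (-α) := by
      rw [show (k:ℝ) - α = 1 + ((k:ℝ)-1) + (-α) from by ring, Real.rpow_add hy,
        Real.rpow_add hy, Real.rpow_one]
    have hxk : x ^ (α - (k:ℝ) - 1) = (x ^ (2:ℕ))⁻¹ * (x ^ (-α))⁻¹ * (x ^ ((k:ℝ)-1))⁻¹ := by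
      rw [← Real.rpow_neg hx0.le, ← Real.rpow_neg hx0.le,
        ← Real.rpow_natCast x 2, ← Real.rpow_neg hx0.le,
        ← Real.rpow_add hx0, ← Real.rpow_add hx0]
      norm_num
      ring_nf
    rw [hyk, hxk]
    have h2 : (x:ℝ) ^ (2:ℕ) ≠ 0 := by positivity
    have h3 : (x:ℝ) ^ (-α) ≠ 0 := by positivity
    have h4 : (x:ℝ) ^ ((k:ℝ)-1) ≠ 0 := by positivity
    field_simp
  rw [setIntegral_congr_fun measurableSet_Ioo hcongr, integral_const_mul]
  congr 1
  have := real_beta (s := α - k) (t := (k:ℝ)) (by linarith) (by positivity)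
  rw [show α - (k:ℝ) + (k:ℝ) = α from by ring] at this
  exact this

theorem stmt_13 (g : ℝ → ℂ) (A α : ℝ) (hA : 0 ≤ A) (hα : 2 < α)
    (k : ℕ) (hk : 1 ≤ k) (hαk : α - k ∈ Set.Ioc (1:ℝ) 2)
    (hg : ∀ y : ℝ, 0 < y → ‖g y‖ ≤ A * y ^ (-α))
    (h : ℝ → ℂ)
    (hdef : ∀ y : ℝ, 0 < y →
      h y = -(((k - 1).factorial : ℂ))⁻¹ *
        ∫ z in Set.Ioi y, g z * ((y : ℂ) - (z : ℂ)) ^ (k - 1)) :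
    ∀ y : ℝ, 0 < y →
      ‖h y‖ ≤ A * Real.Gamma (α - k) / (y ^ (α - k) * Real.Gamma α) := by
  intro y hy
  obtain ⟨hαk1, hαk2⟩ := hαk
  have hck : ((k - 1 : ℕ) : ℝ) = (k:ℝ) - 1 := by
    rw [Nat.cast_sub hk]; norm_num
  have hc0 : (0:ℝ) ≤ (k:ℝ) - 1 := by
    have : (1:ℝ) ≤ (k:ℝ) := by exact_mod_cast hk
    linarith
  -- integrability of the dominating function
  have hFmeas : AEStronglyMeasurable
      (fun z : ℝ => z ^ (-α) * (z - y) ^ ((k:ℝ) - 1)) (volume.restrict (Set.Ioi y)) := by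
    refine ContinuousOn.aestronglyMeasurable ?_ measurableSet_Ioi
    refine ContinuousOn.mul ?_ ?_
    · exact continuousOn_id.rpow_const fun z hz => Or.inl (hy.trans hz).ne'
    · exact (continuousOn_id.sub continuousOn_const).rpow_const fun z hz => Or.inr hc0
  have hG : IntegrableOn (fun z : ℝ => z ^ ((k:ℝ) - 1 - α)) (Set.Ioi y) := by
    refine integrableOn_Ioi_rpow_of_lt ?_ hy
    have : (1:ℝ) < α - k := hαk1
    linarith
  have hFint : IntegrableOn
      (fun z : ℝ => z ^ (-α) * (z - y) ^ ((k:ℝ) - 1)) (Set.Ioi y) := by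
    refine Integrable.mono hG hFmeas ?_
    refine (ae_restrict_iff' measurableSet_Ioi).mpr (Filter.Eventually.of_forall fun z hz => ?_)
    have hz0 : 0 < z := hy.trans hz
    have hzy : 0 < z - y := sub_pos.mpr hz
    rw [Real.norm_eq_abs, Real.norm_eq_abs, abs_of_nonneg (by positivity),
      abs_of_nonneg (by positivity)]
    calc z ^ (-α) * (z - y) ^ ((k:ℝ) - 1)
        ≤ z ^ (-α) * z ^ ((k:ℝ) - 1) := by
          refine mul_le_mul_of_nonneg_left ?_ (by positivity)
          exact Real.rpow_le_rpow hzy.le (by linarith) hc0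
      _ = z ^ ((k:ℝ) - 1 - α) := by
          rw [← Real.rpow_add hz0]; ring_nf
  have hAFint : IntegrableOn
      (fun z : ℝ => A * (z ^ (-α) * (z - y) ^ ((k:ℝ) - 1))) (Set.Ioi y) := hFint.const_mul A
  -- norm bound on the integral
  have step1 : ‖∫ z in Set.Ioi y, g z * ((y : ℂ) - (z : ℂ)) ^ (k - 1)‖
      ≤ ∫ z in Set.Ioi y, A * (z ^ (-α) * (z - y) ^ ((k:ℝ) - 1)) := by
    refine (norm_integral_le_integral_norm _).trans ?_
    refine integral_mono_of_nonneg (Filter.Eventually.of_forall fun z => norm_nonneg _)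
      hAFint ?_
    refine (ae_restrict_iff' measurableSet_Ioi).mpr (Filter.Eventually.of_forall fun z hz => ?_)
    have hz0 : 0 < z := hy.trans hz
    have hzy : 0 < z - y := sub_pos.mpr hz
    have e1 : ‖g z * ((y : ℂ) - (z : ℂ)) ^ (k - 1)‖ = ‖g z‖ * (z - y) ^ ((k:ℝ) - 1) := by
      rw [norm_mul, norm_pow]
      congr 1
      rw [← hck, Real.rpow_natCast]
      rw [show ((y : ℂ) - (z : ℂ)) = ((y - z : ℝ) : ℂ) from by push_cast; ring,
        Complex.norm_real, Real.norm_eq_abs, abs_sub_comm, abs_of_pos hzy]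
    show ‖g z * ((y : ℂ) - (z : ℂ)) ^ (k - 1)‖ ≤ A * (z ^ (-α) * (z - y) ^ ((k:ℝ) - 1))
    rw [e1]
    calc ‖g z‖ * (z - y) ^ ((k:ℝ) - 1)
        ≤ (A * z ^ (-α)) * (z - y) ^ ((k:ℝ) - 1) :=
          mul_le_mul_of_nonneg_right (hg z hz0) (by positivity)
      _ = A * (z ^ (-α) * (z - y) ^ ((k:ℝ) - 1)) := by ring
  -- evaluate
  have hJ := J_eq (y := y) (α := α) k hy hαk1 hk
  rw [integral_const_mul, hJ] at step1
  rw [hdef y hy, norm_mul, norm_neg, norm_inv]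
  have hnorm : ‖((k - 1).factorial : ℂ)‖ = ((k-1).factorial : ℝ) := by
    simp
  rw [hnorm]
  have hfac : (0:ℝ) < ((k-1).factorial : ℝ) := by positivity
  have hGk : Real.Gamma (k:ℝ) = ((k-1).factorial : ℝ) := by
    rw [show (k:ℝ) = ((k-1:ℕ):ℝ) + 1 from by rw [hck]; ring]
    exact_mod_cast Real.Gamma_nat_eq_factorial (k-1)
  have hyk : y ^ ((k:ℝ) - α) = (y ^ (α - (k:ℝ)))⁻¹ := by
    rw [show (k:ℝ) - α = -(α - (k:ℝ)) from by ring, Real.rpow_neg hy.le]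
  have hGα : 0 < Real.Gamma α := Real.Gamma_pos_of_pos (by linarith)
  have hGαk : 0 ≤ Real.Gamma (α - k) := (Real.Gamma_pos_of_pos (by linarith)).le
  have hyp : 0 < y ^ (α - (k:ℝ)) := Real.rpow_pos_of_pos hy _
  calc ((k-1).factorial : ℝ)⁻¹ * ‖∫ z in Set.Ioi y, g z * ((y : ℂ) - (z : ℂ)) ^ (k - 1)‖
      ≤ ((k-1).factorial : ℝ)⁻¹ *
        (A * (y ^ ((k:ℝ) - α) * (Real.Gamma (α - k) * Real.Gamma k / Real.Gamma α))) :=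
        mul_le_mul_of_nonneg_left step1 (by positivity)
    _ = A * Real.Gamma (α - k) / (y ^ (α - k) * Real.Gamma α) := by
        rw [hGk, hyk]
        field_simp
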